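/- Let I be an open real interval, K₁, K₂, c₁, c₂ ∈ ℝ, and let w : [0,1] × I → ℝ be C⁴. Suppose that for all (x,t) ∈ [0,1] × I: w_tt + w_xxxx − w_xxtt = 0, and for all t ∈ I: w(0,t) = w_x(0,t) = 0, w_xx(1,t) = −K₁ c₁, and w_xtt(1,t) − w_xxx(1,t) = −K₂ c₂. Define E(t) = ½∫₀¹ w_t(x,t)² dx + ½∫₀¹ w_xx(x,t)² dx + ½∫₀¹ w_xt(x,t)² dx. Then for all t ∈ I, E'(t) = −K₁ c₁ w_xt(1,t) − K₂ c₂ w_t(1,t). -/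

import Mathlib

open Real Set

/-- `w_t`: partial derivative of `w` in time. -/
noncomputable def pt (w : ℝ → ℝ → ℝ) (x t : ℝ) : ℝ := deriv (fun s => w x s) t

/-- `w_x`: partial derivative of `w` in space. -/
noncomputable def px (w : ℝ → ℝ → ℝ) (x t : ℝ) : ℝ := deriv (fun y => w y t) x

/-- `w_tt`. -/
noncomputable def ptt (w : ℝ → ℝ → ℝ) (x t : ℝ) : ℝ := deriv (fun s => pt w x s) t

/-- `w_xt`: spatial derivative of `w_t`. -/
noncomputable def pxt (w : ℝ → ℝ → ℝ) (x t : ℝ) : ℝ := deriv (fun y => pt w y t) x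

/-- `w_xx`. -/
noncomputable def pxx (w : ℝ → ℝ → ℝ) (x t : ℝ) : ℝ := deriv (fun y => px w y t) x

/-- `w_xxx`. -/
noncomputable def pxxx (w : ℝ → ℝ → ℝ) (x t : ℝ) : ℝ := deriv (fun y => pxx w y t) x

/-- `w_xxxx`. -/
noncomputable def pxxxx (w : ℝ → ℝ → ℝ) (x t : ℝ) : ℝ := deriv (fun y => pxxx w y t) x

/-- `w_xtt`: time derivative of `w_xt`. -/
noncomputable def pxtt (w : ℝ → ℝ → ℝ) (x t : ℝ) : ℝ := deriv (fun s => pxt w x s) t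

/-- `w_xxtt`: second spatial derivative of `w_tt`. -/
noncomputable def pxxtt (w : ℝ → ℝ → ℝ) (x t : ℝ) : ℝ :=
  deriv (fun y => deriv (fun z => ptt w z t) y) x

/-- The energy E(t) = ½∫₀¹ w_t² + ½∫₀¹ w_xx² + ½∫₀¹ w_xt² dx. -/
noncomputable def energy (w : ℝ → ℝ → ℝ) (t : ℝ) : ℝ :=
  (1/2) * (∫ x in (0:ℝ)..1, (pt w x t) ^ 2)
    + (1/2) * (∫ x in (0:ℝ)..1, (pxx w x t) ^ 2)
    + (1/2) * (∫ x in (0:ℝ)..1, (pxt w x t) ^ 2)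

/-- The auxiliary functional ϱ(t) = ∫₀¹ ( w_t(x w_x − α w) + w_xt[(1−α)w_x + x w_xx] ) dx. -/
noncomputable def rhoFun (w : ℝ → ℝ → ℝ) (α : ℝ) (t : ℝ) : ℝ :=
  ∫ x in (0:ℝ)..1,
    (pt w x t * (x * px w x t - α * w x t)
      + pxt w x t * ((1 - α) * px w x t + x * pxx w x t))



noncomputable def dv (v : ℝ × ℝ) (g : ℝ × ℝ → ℝ) (p : ℝ × ℝ) : ℝ := fderiv ℝ g p v

theorem contDiff_dv {n m : WithTop ℕ∞} {g : ℝ × ℝ → ℝ} (hg : ContDiff ℝ n g)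
    (h : m + 1 ≤ n) (v : ℝ × ℝ) : ContDiff ℝ m (dv v g) :=
  (hg.fderiv_right h).clm_apply contDiff_const

theorem sliceX {g : ℝ × ℝ → ℝ} {x t : ℝ} (hg : DifferentiableAt ℝ g (x, t)) :
    HasDerivAt (fun y => g (y, t)) (dv (1, 0) g (x, t)) x :=
  hg.hasFDerivAt.comp_hasDerivAt x (HasDerivAt.prodMk (hasDerivAt_id x) (hasDerivAt_const x t))

theorem sliceT {g : ℝ × ℝ → ℝ} {x t : ℝ} (hg : DifferentiableAt ℝ g (x, t)) :
    HasDerivAt (fun s => g (x, s)) (dv (0, 1) g (x, t)) t :=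
  hg.hasFDerivAt.comp_hasDerivAt t (HasDerivAt.prodMk (hasDerivAt_const t x) (hasDerivAt_id t))

theorem dv_comm {g : ℝ × ℝ → ℝ} (hg : ContDiff ℝ 2 g) (u v p) :
    dv u (dv v g) p = dv v (dv u g) p := by
  have hd : DifferentiableAt ℝ (fderiv ℝ g) p :=
    ((hg.fderiv_right (m := 1) (by norm_num)).differentiable (by norm_num)).differentiableAt
  have key : ∀ z y : ℝ × ℝ, dv y (dv z g) p = fderiv ℝ (fderiv ℝ g) p y z := by
    intro z y
    have h1 : HasFDerivAt (fun q => (ContinuousLinearMap.apply ℝ ℝ z) (fderiv ℝ g q))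
        ((ContinuousLinearMap.apply ℝ ℝ z).comp (fderiv ℝ (fderiv ℝ g) p)) p :=
      (ContinuousLinearMap.apply ℝ ℝ z).hasFDerivAt.comp p hd.hasFDerivAt
    show fderiv ℝ (fun q => fderiv ℝ g q z) p y = _
    rw [show (fun q => fderiv ℝ g q z)
        = fun q => (ContinuousLinearMap.apply ℝ ℝ z) (fderiv ℝ g q) from rfl, h1.fderiv]
    rfl
  rw [key, key, hg.contDiffAt.isSymmSndFDerivAt (by simp [minSmoothness_of_isRCLikeNormedField]) u v]

theorem DUI {g g' : ℝ × ℝ → ℝ} (hg : Continuous g) (hg' : Continuous g')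
    (hd : ∀ x s, HasDerivAt (fun s' => g (x, s')) (g' (x, s)) s) (t₀ : ℝ) :
    HasDerivAt (fun s => ∫ x in (0:ℝ)..1, g (x, s)) (∫ x in (0:ℝ)..1, g' (x, t₀)) t₀ := by
  obtain ⟨C, hC⟩ : ∃ C, ∀ p ∈ (Icc (0:ℝ) 1 ×ˢ Icc (t₀ - 1) (t₀ + 1)), ‖g' p‖ ≤ C :=
    (isCompact_Icc.prod isCompact_Icc).exists_bound_of_continuousOn hg'.continuousOn
  have key := intervalIntegral.hasDerivAt_integral_of_dominated_loc_of_deriv_le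
    (F := fun s x => g (x, s)) (F' := fun s x => g' (x, s)) (x₀ := t₀)
    (a := (0:ℝ)) (b := 1) (μ := MeasureTheory.volume) (bound := fun _ => C) (Metric.ball_mem_nhds t₀ one_pos)
    (Filter.Eventually.of_forall fun s =>
      (hg.comp (continuous_id.prodMk continuous_const)).aestronglyMeasurable)
    ((hg.comp (continuous_id.prodMk continuous_const)).intervalIntegrable 0 1)
    (hg'.comp (continuous_id.prodMk continuous_const)).aestronglyMeasurable
    (MeasureTheory.ae_of_all _ fun x hx s hs => by
      refine hC (x, s) ⟨?_, ?_⟩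
      · rw [Set.uIoc_of_le (zero_le_one)] at hx
        exact ⟨le_of_lt hx.1, hx.2⟩
      · have := Metric.mem_ball.mp hs
        rw [Real.dist_eq] at this
        constructor <;> [linarith [abs_lt.mp this]; linarith [(abs_lt.mp this).2]])
    (intervalIntegrable_const)
    (MeasureTheory.ae_of_all _ fun x _ s _ => hd x s)
  exact key.2

theorem IBP (t : ℝ) (u v u' v' : ℝ × ℝ → ℝ)
    (hu : ∀ x : ℝ, HasDerivAt (fun y => u (y, t)) (u' (x, t)) x)
    (hv : ∀ x : ℝ, HasDerivAt (fun y => v (y, t)) (v' (x, t)) x)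
    (hu' : Continuous u') (hv' : Continuous v') :
    ∫ x in (0:ℝ)..1, u (x, t) * v' (x, t)
      = u (1, t) * v (1, t) - u (0, t) * v (0, t) - ∫ x in (0:ℝ)..1, u' (x, t) * v (x, t) :=
  intervalIntegral.integral_mul_deriv_eq_deriv_mul (fun x _ => hu x) (fun x _ => hv x)
    ((hu'.comp (continuous_id.prodMk continuous_const)).intervalIntegrable 0 1)
    ((hv'.comp (continuous_id.prodMk continuous_const)).intervalIntegrable 0 1)

theorem hasDerivAt_int_sq {g : ℝ × ℝ → ℝ} (hg : ContDiff ℝ 2 g) (t₀ : ℝ) :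
    HasDerivAt (fun s => ∫ x in (0:ℝ)..1, (g (x, s)) ^ 2)
      (∫ x in (0:ℝ)..1, 2 * g (x, t₀) * dv (0,1) g (x, t₀)) t₀ := by
  apply DUI (g := fun p => g p ^ 2) (g' := fun p => 2 * g p * dv (0,1) g p)
  · exact hg.continuous.pow 2
  · exact (continuous_const.mul hg.continuous).mul
      ((contDiff_dv (m := 1) hg (by norm_num) (0,1)).continuous)
  · intro x s
    have h := sliceT ((hg.differentiable (by norm_num)) (x, s))
    have h2 := h.fun_pow 2
    simpa [pow_one] using h2

section eqs
variable {w : ℝ → ℝ → ℝ} (hw : ContDiff ℝ 4 (Function.uncurry w))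
local notation "𝓕" => Function.uncurry w
include hw

theorem hC3 (v : ℝ × ℝ) : ContDiff ℝ 3 (dv v 𝓕) := contDiff_dv hw (by norm_num) v
theorem hC2 (u v : ℝ × ℝ) : ContDiff ℝ 2 (dv u (dv v 𝓕)) :=
  contDiff_dv (hC3 hw v) (by norm_num) u
theorem hC1 (u v z : ℝ × ℝ) : ContDiff ℝ 1 (dv u (dv v (dv z 𝓕))) :=
  contDiff_dv (hC2 hw v z) (by norm_num) u
theorem hC0 (u v z y : ℝ × ℝ) : Continuous (dv u (dv v (dv z (dv y 𝓕)))) :=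
  (contDiff_dv (m := 0) (hC1 hw v z y) (by norm_num) u).continuous

theorem pt_eq (x t : ℝ) : pt w x t = dv (0,1) 𝓕 (x, t) :=
  (sliceT ((hw.differentiable (by norm_num)) (x, t))).deriv

theorem px_eq (x t : ℝ) : px w x t = dv (1,0) 𝓕 (x, t) :=
  (sliceX ((hw.differentiable (by norm_num)) (x, t))).deriv

theorem ptt_eq (x t : ℝ) : ptt w x t = dv (0,1) (dv (0,1) 𝓕) (x, t) := by
  unfold ptt
  simp only [pt_eq hw]
  exact (sliceT (((hC3 hw (0,1)).differentiable (by norm_num)) (x, t))).deriv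

theorem pxt_eq (x t : ℝ) : pxt w x t = dv (1,0) (dv (0,1) 𝓕) (x, t) := by
  unfold pxt
  simp only [pt_eq hw]
  exact (sliceX (((hC3 hw (0,1)).differentiable (by norm_num)) (x, t))).deriv

theorem pxx_eq (x t : ℝ) : pxx w x t = dv (1,0) (dv (1,0) 𝓕) (x, t) := by
  unfold pxx
  simp only [px_eq hw]
  exact (sliceX (((hC3 hw (1,0)).differentiable (by norm_num)) (x, t))).deriv

theorem pxxx_eq (x t : ℝ) : pxxx w x t = dv (1,0) (dv (1,0) (dv (1,0) 𝓕)) (x, t) := by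
  unfold pxxx
  simp only [pxx_eq hw]
  exact (sliceX (((hC2 hw (1,0) (1,0)).differentiable (by norm_num)) (x, t))).deriv

theorem pxxxx_eq (x t : ℝ) :
    pxxxx w x t = dv (1,0) (dv (1,0) (dv (1,0) (dv (1,0) 𝓕))) (x, t) := by
  unfold pxxxx
  simp only [pxxx_eq hw]
  exact (sliceX (((hC1 hw (1,0) (1,0) (1,0)).differentiable (by norm_num)) (x, t))).deriv

theorem pxtt_eq (x t : ℝ) : pxtt w x t = dv (0,1) (dv (1,0) (dv (0,1) 𝓕)) (x, t) := by
  unfold pxtt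
  simp only [pxt_eq hw]
  exact (sliceT (((hC2 hw (1,0) (0,1)).differentiable (by norm_num)) (x, t))).deriv

theorem pxxtt_eq (x t : ℝ) :
    pxxtt w x t = dv (1,0) (dv (1,0) (dv (0,1) (dv (0,1) 𝓕))) (x, t) := by
  unfold pxxtt
  have h1 : ∀ y : ℝ, deriv (fun z => ptt w z t) y
      = dv (1,0) (dv (0,1) (dv (0,1) 𝓕)) (y, t) := by
    intro y
    simp only [ptt_eq hw]
    exact (sliceX (((hC2 hw (0,1) (0,1)).differentiable (by norm_num)) (y, t))).deriv
  simp only [h1]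
  exact (sliceX (((hC1 hw (1,0) (0,1) (0,1)).differentiable (by norm_num)) (x, t))).deriv

end eqs


/-- Energy derivative identity for the Rayleigh beam with held boundary inputs:
E'(t) = −K₁ c₁ w_xt(1,t) − K₂ c₂ w_t(1,t). -/
theorem stmt_4 (a b K₁ K₂ c₁ c₂ : ℝ) (w : ℝ → ℝ → ℝ)
    (hw : ContDiff ℝ 4 (Function.uncurry w))
    (hpde : ∀ x ∈ Set.Icc (0:ℝ) 1, ∀ t ∈ Set.Ioo a b,
      ptt w x t + pxxxx w x t - pxxtt w x t = 0)
    (hbc0 : ∀ t ∈ Set.Ioo a b, w 0 t = 0 ∧ px w 0 t = 0)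
    (hbc1 : ∀ t ∈ Set.Ioo a b, pxx w 1 t = -K₁ * c₁)
    (hbc2 : ∀ t ∈ Set.Ioo a b, pxtt w 1 t - pxxx w 1 t = -K₂ * c₂) :
    ∀ t ∈ Set.Ioo a b,
      HasDerivAt (energy w) (-K₁ * c₁ * pxt w 1 t - K₂ * c₂ * pt w 1 t) t := by
  intro t ht
  -- notation
  have hE : energy w = fun s =>
      (1/2) * (∫ x in (0:ℝ)..1, (dv (0,1) (Function.uncurry w) (x, s)) ^ 2)
      + (1/2) * (∫ x in (0:ℝ)..1, (dv (1,0) (dv (1,0) (Function.uncurry w)) (x, s)) ^ 2)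
      + (1/2) * (∫ x in (0:ℝ)..1, (dv (1,0) (dv (0,1) (Function.uncurry w)) (x, s)) ^ 2) := by
    funext s
    simp only [energy, pt_eq hw, pxx_eq hw, pxt_eq hw]
  rw [hE]
  have hd1 := hasDerivAt_int_sq ((hC3 hw (0,1)).of_le (by norm_num)) t
  have hd2 := hasDerivAt_int_sq (hC2 hw (1,0) (1,0)) t
  have hd3 := hasDerivAt_int_sq (hC2 hw (1,0) (0,1)) t
  have hsum := ((hd1.const_mul (1/2:ℝ)).add (hd2.const_mul (1/2:ℝ))).add
    (hd3.const_mul (1/2:ℝ))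
  convert hsum using 1
  · rfl
  · rfl
  · rfl
  -- shorthand
  have cC : ∀ p, dv (0,1) (dv (1,0) (Function.uncurry w)) p
      = dv (1,0) (dv (0,1) (Function.uncurry w)) p :=
    dv_comm (hw.of_le (by norm_num)) _ _
  have cC' : dv (0,1) (dv (1,0) (Function.uncurry w))
      = dv (1,0) (dv (0,1) (Function.uncurry w)) := funext cC
  have cA : ∀ p, dv (0,1) (dv (1,0) (dv (0,1) (Function.uncurry w))) p
      = dv (1,0) (dv (0,1) (dv (0,1) (Function.uncurry w))) p :=
    dv_comm ((hC3 hw (0,1)).of_le (by norm_num)) _ _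
  have cB : ∀ p, dv (0,1) (dv (1,0) (dv (1,0) (Function.uncurry w))) p
      = dv (1,0) (dv (1,0) (dv (0,1) (Function.uncurry w))) p := by
    intro p
    rw [dv_comm ((hC3 hw (1,0)).of_le (by norm_num)) (0,1) (1,0) p, cC']
  have half : ∀ g h : ℝ × ℝ → ℝ,
      (1/2:ℝ) * (∫ x in (0:ℝ)..1, 2 * g (x,t) * h (x,t))
        = ∫ x in (0:ℝ)..1, g (x,t) * h (x,t) := by
    intro g h
    rw [← intervalIntegral.integral_const_mul]
    apply intervalIntegral.integral_congr
    intro x _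
    ring
  have intg : ∀ {A B : ℝ × ℝ → ℝ}, Continuous A → Continuous B →
      IntervalIntegrable (fun x : ℝ => A (x,t) * B (x,t)) MeasureTheory.volume 0 1 :=
    fun hA hB => ((hA.comp (continuous_id.prodMk continuous_const)).mul
      (hB.comp (continuous_id.prodMk continuous_const))).intervalIntegrable 0 1
  have hI2 : (∫ x in (0:ℝ)..1, dv (1,0) (dv (1,0) (Function.uncurry w)) (x,t)
        * dv (0,1) (dv (1,0) (dv (1,0) (Function.uncurry w))) (x,t))
      = ∫ x in (0:ℝ)..1, dv (1,0) (dv (1,0) (Function.uncurry w)) (x,t)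
        * dv (1,0) (dv (1,0) (dv (0,1) (Function.uncurry w))) (x,t) :=
    intervalIntegral.integral_congr (fun x _ => by rw [cB (x,t)])
  have hI3 : (∫ x in (0:ℝ)..1, dv (1,0) (dv (0,1) (Function.uncurry w)) (x,t)
        * dv (0,1) (dv (1,0) (dv (0,1) (Function.uncurry w))) (x,t))
      = ∫ x in (0:ℝ)..1, dv (1,0) (dv (0,1) (Function.uncurry w)) (x,t)
        * dv (1,0) (dv (0,1) (dv (0,1) (Function.uncurry w))) (x,t) :=
    intervalIntegral.integral_congr (fun x _ => by rw [cA (x,t)])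
  have hpde' : ∀ x ∈ Set.Icc (0:ℝ) 1,
      dv (0,1) (dv (0,1) (Function.uncurry w)) (x,t)
        = dv (1,0) (dv (1,0) (dv (0,1) (dv (0,1) (Function.uncurry w)))) (x,t)
          - dv (1,0) (dv (1,0) (dv (1,0) (dv (1,0) (Function.uncurry w)))) (x,t) := by
    intro x hx
    have h := hpde x hx t ht
    rw [ptt_eq hw, pxxxx_eq hw, pxxtt_eq hw] at h
    linarith
  have hI1 : (∫ x in (0:ℝ)..1, dv (0,1) (Function.uncurry w) (x,t)
        * dv (0,1) (dv (0,1) (Function.uncurry w)) (x,t))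
      = (∫ x in (0:ℝ)..1, dv (0,1) (Function.uncurry w) (x,t)
          * dv (1,0) (dv (1,0) (dv (0,1) (dv (0,1) (Function.uncurry w))))
            (x,t))
        - ∫ x in (0:ℝ)..1, dv (0,1) (Function.uncurry w) (x,t)
          * dv (1,0) (dv (1,0) (dv (1,0) (dv (1,0) (Function.uncurry w))))
            (x,t) := by
    rw [← intervalIntegral.integral_sub
      (intg (hC3 hw (0,1)).continuous (hC0 hw (1,0) (1,0) (0,1) (0,1)))
      (intg (hC3 hw (0,1)).continuous (hC0 hw (1,0) (1,0) (1,0) (1,0)))]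
    apply intervalIntegral.integral_congr
    intro x hx
    rw [Set.uIcc_of_le zero_le_one] at hx
    simp only [hpde' x hx]
    ring
  have hder : ∀ (g : ℝ × ℝ → ℝ), ContDiff ℝ 1 g →
      ∀ x : ℝ, HasDerivAt (fun y => g (y,t)) (dv (1,0) g (x,t)) x :=
    fun g hg x => sliceX ((hg.differentiable one_ne_zero) (x,t))
  have IBP1 := IBP t (dv (0,1) (Function.uncurry w))
      (dv (1,0) (dv (0,1) (dv (0,1) (Function.uncurry w))))
      (dv (1,0) (dv (0,1) (Function.uncurry w)))
      (dv (1,0) (dv (1,0) (dv (0,1) (dv (0,1) (Function.uncurry w)))))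
      (hder _ ((hC3 hw (0,1)).of_le (by norm_num)))
      (hder _ (hC1 hw (1,0) (0,1) (0,1)))
      (hC2 hw (1,0) (0,1)).continuous
      (hC0 hw (1,0) (1,0) (0,1) (0,1))
  have IBP2 := IBP t (dv (0,1) (Function.uncurry w))
      (dv (1,0) (dv (1,0) (dv (1,0) (Function.uncurry w))))
      (dv (1,0) (dv (0,1) (Function.uncurry w)))
      (dv (1,0) (dv (1,0) (dv (1,0) (dv (1,0) (Function.uncurry w)))))
      (hder _ ((hC3 hw (0,1)).of_le (by norm_num)))
      (hder _ (hC1 hw (1,0) (1,0) (1,0)))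
      (hC2 hw (1,0) (0,1)).continuous
      (hC0 hw (1,0) (1,0) (1,0) (1,0))
  have IBP3 := IBP t (dv (1,0) (dv (1,0) (Function.uncurry w)))
      (dv (1,0) (dv (0,1) (Function.uncurry w)))
      (dv (1,0) (dv (1,0) (dv (1,0) (Function.uncurry w))))
      (dv (1,0) (dv (1,0) (dv (0,1) (Function.uncurry w))))
      (hder _ ((hC2 hw (1,0) (1,0)).of_le (by norm_num)))
      (hder _ ((hC2 hw (1,0) (0,1)).of_le (by norm_num)))
      (hC1 hw (1,0) (1,0) (1,0)).continuous
      (hC1 hw (1,0) (1,0) (0,1)).continuous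
  have hcomm : (∫ x in (0:ℝ)..1, dv (1,0) (dv (1,0) (dv (1,0) (Function.uncurry w))) (x,t)
        * dv (1,0) (dv (0,1) (Function.uncurry w)) (x,t))
      = ∫ x in (0:ℝ)..1, dv (1,0) (dv (0,1) (Function.uncurry w)) (x,t)
        * dv (1,0) (dv (1,0) (dv (1,0) (Function.uncurry w))) (x,t) :=
    intervalIntegral.integral_congr (fun x _ => mul_comm _ _)
  have hz1 : dv (0,1) (Function.uncurry w) ((0:ℝ),t) = 0 := by
    have hev : (fun s => Function.uncurry w ((0:ℝ),s)) =ᶠ[nhds t] fun _ => (0:ℝ) := by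
      filter_upwards [Ioo_mem_nhds ht.1 ht.2] with s hs
      exact (hbc0 s hs).1
    have hD := (sliceT ((hw.differentiable (by norm_num)) ((0:ℝ),t))).deriv
    rw [← hD, hev.deriv_eq]
    simp
  have hz2 : dv (1,0) (dv (0,1) (Function.uncurry w)) ((0:ℝ),t) = 0 := by
    rw [← cC ((0:ℝ),t)]
    have hev : (fun s => dv (1,0) (Function.uncurry w) ((0:ℝ),s))
        =ᶠ[nhds t] fun _ => (0:ℝ) := by
      filter_upwards [Ioo_mem_nhds ht.1 ht.2] with s hs
      rw [← px_eq hw]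
      exact (hbc0 s hs).2
    have hD := (sliceT (((hC3 hw (1,0)).differentiable (by norm_num)) ((0:ℝ),t))).deriv
    rw [← hD, hev.deriv_eq]
    simp
  have hb1' : dv (1,0) (dv (1,0) (Function.uncurry w)) ((1:ℝ),t) = -K₁ * c₁ := by
    rw [← pxx_eq hw]
    exact hbc1 t ht
  have hb2' : dv (1,0) (dv (0,1) (dv (0,1) (Function.uncurry w))) ((1:ℝ),t)
      - dv (1,0) (dv (1,0) (dv (1,0) (Function.uncurry w))) ((1:ℝ),t) = -K₂ * c₂ := by
    rw [← cA ((1:ℝ),t), ← pxtt_eq hw, ← pxxx_eq hw]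
    exact hbc2 t ht
  rw [half (dv (0,1) (Function.uncurry w)) (dv (0,1) (dv (0,1) (Function.uncurry w))),
    half (dv (1,0) (dv (1,0) (Function.uncurry w)))
      (dv (0,1) (dv (1,0) (dv (1,0) (Function.uncurry w)))),
    half (dv (1,0) (dv (0,1) (Function.uncurry w)))
      (dv (0,1) (dv (1,0) (dv (0,1) (Function.uncurry w)))),
    hI2, hI3, hI1, IBP1, IBP2, IBP3, hcomm, hz1, hz2,
    pxt_eq hw, pt_eq hw]
  linear_combination (-(dv (1,0) (dv (0,1) (Function.uncurry w)) ((1:ℝ),t))) * hb1'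
    + (-(dv (0,1) (Function.uncurry w) ((1:ℝ),t))) * hb2'
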